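/- For every integer k, D_a · (D_b·γ^k) = k² + ½(-1)^k + ½, where D_a, D_b are the explicit vectors in (½Z)^10 below, the pairing is v·w = v M wᵀ with M the E10 Gram matrix, and γ is the explicit matrix below. -/

import Mathlib

open Matrix

def E10 : Matrix (Fin 10) (Fin 10) ℤ :=
  !![-2, 0, 0, 1, 0, 0, 0, 0, 0, 0;
      0,-2, 1, 0, 0, 0, 0, 0, 0, 0;
      0, 1,-2, 1, 0, 0, 0, 0, 0, 0;
      1, 0, 1,-2, 1, 0, 0, 0, 0, 0;
      0, 0, 0, 1,-2, 1, 0, 0, 0, 0;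
      0, 0, 0, 0, 1,-2, 1, 0, 0, 0;
      0, 0, 0, 0, 0, 1,-2, 1, 0, 0;
      0, 0, 0, 0, 0, 0, 1,-2, 1, 0;
      0, 0, 0, 0, 0, 0, 0, 1,-2, 1;
      0, 0, 0, 0, 0, 0, 0, 0, 1,-2]
def eps : Matrix (Fin 10) (Fin 10) ℤ :=
  !![-3,-2,-4,-6,-5,-4,-3,-2, 0, 0;
      0,-1, 0, 0, 0, 0, 0, 0, 0, 0;
      2, 2, 3, 4, 3, 2, 1, 0, 0, 0;
      0, 0, 0, 0, 0, 0, 0, 1, 0, 0;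
      0, 0, 0, 0, 0, 0, 1, 0, 0, 0;
      0, 0, 0, 0, 0, 1, 0, 0, 0, 0;
      0, 0, 0, 0, 1, 0, 0, 0, 0, 0;
      0, 0, 0, 1, 0, 0, 0, 0, 0, 0;
      4, 2, 4, 6, 5, 4, 3, 2, 1, 0;
      0, 0, 0, 0, 0, 0, 0, 0, 0, 1]

def gam : Matrix (Fin 10) (Fin 10) ℤ :=
  !![-9,-4,-10,-16,-13,-10,-7,-6,-4,-2;
     -8,-3, -8,-14,-12,-10,-8,-6,-4,-2;
     10, 4, 11, 18, 15, 12, 9, 6, 4, 2;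
      0, 0,  0,  0,  0,  0, 0, 1, 0, 0;
      0, 0,  0,  0,  0,  0, 0, 0, 1, 0;
      0, 0,  0,  0,  0,  0, 0, 0, 0, 1;
      4, 2,  4,  6,  5,  4, 3, 2, 1, 0;
      0, 0,  0,  1,  0,  0, 0, 0, 0, 0;
      0, 0,  0,  0,  1,  0, 0, 0, 0, 0;
      0, 0,  0,  0,  0,  1, 0, 0, 0, 0]

/-- The E10 Gram matrix over `ℚ`. -/
def E10Q : Matrix (Fin 10) (Fin 10) ℚ := E10.map ((↑) : ℤ → ℚ)

/-- `γ` as a matrix over `ℚ`. -/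
def gamQ : Matrix (Fin 10) (Fin 10) ℚ := gam.map ((↑) : ℤ → ℚ)

def R0 : Fin 10 → ℚ := ![4, 2, 4, 6, 5, 4, 3, 2, 1, 0]
def R1 : Fin 10 → ℚ := ![2, 2, 3, 4, 3, 2, 1, 0, 0, 0]
def R2 : Fin 10 → ℚ := ![0, 0, 0, 0, 0, 0, 0, 0, 0, 1]
def R3 : Fin 10 → ℚ := ![0, 0, 0, 0, 0, 0, 0, 0, 1, 0]
def R4 : Fin 10 → ℚ := ![0, 0, 0, 0, 0, 0, 0, 1, 0, 0]
def R5 : Fin 10 → ℚ := ![0, 0, 0, 0, 0, 0, 1, 0, 0, 0]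
def R6 : Fin 10 → ℚ := ![0, 0, 0, 0, 0, 1, 0, 0, 0, 0]
def R7 : Fin 10 → ℚ := ![0, 0, 0, 0, 1, 0, 0, 0, 0, 0]
def R8 : Fin 10 → ℚ := ![0, 0, 1, 0, 0, 0, 0, 0, 0, 0]
def R9 : Fin 10 → ℚ := ![0, 0, 0, 1, 0, 0, 0, 0, 0, 0]

/-- The half-fiber classes `D_a` and `D_b` of type `D̃₈`. -/
def Da : Fin 10 → ℚ := (1/2 : ℚ) • (R0 + R1 + R3 + 2 • R4 + 2 • R5 + 2 • R6 + 2 • R7 + 2 • R9 + R8)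

def Db : Fin 10 → ℚ := (1/2 : ℚ) • (2 • R0 + R1 + 2 • R2 + 2 • R3 + 2 • R4 + R5 + R7 + 2 • R9 + R8)

def vA : Fin 10 → ℚ := ![4, 5/2, 5, 15/2, 6, 9/2, 7/2, 5/2, 3/2, 1/2]
def vB : Fin 10 → ℚ := ![0, -1, 0, 0, 0, 0, 0, 0, 0, 0]
def vC : Fin 10 → ℚ := ![4, 2, 4, 7, 6, 5, 4, 3, 2, 1]
def vD : Fin 10 → ℚ := ![1, 1/2, 1, 3/2, 1, 1/2, 1/2, 1/2, 1/2, 1/2]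

def gamInvZ : Matrix (Fin 10) (Fin 10) ℤ :=
  !![-9,-6,-10,-16,-13,-10,-7,-6,-4,-2;
      8, 5,  8, 14, 12, 10, 8, 6, 4, 2;
      2, 2,  3,  4,  3,  2, 1, 0, 0, 0;
      0, 0,  0,  0,  0,  0, 0, 1, 0, 0;
      0, 0,  0,  0,  0,  0, 0, 0, 1, 0;
      0, 0,  0,  0,  0,  0, 0, 0, 0, 1;
      4, 2,  4,  6,  5,  4, 3, 2, 1, 0;
      0, 0,  0,  1,  0,  0, 0, 0, 0, 0;
      0, 0,  0,  0,  1,  0, 0, 0, 0, 0;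
      0, 0,  0,  0,  0,  1, 0, 0, 0, 0]

def gamInvQ : Matrix (Fin 10) (Fin 10) ℚ := gamInvZ.map ((↑) : ℤ → ℚ)

set_option maxHeartbeats 1000000 in
lemma gamZ_mul_inv : gam * gamInvZ = 1 := by decide

set_option maxHeartbeats 1000000 in
lemma gamZ_inv_mul : gamInvZ * gam = 1 := by decide

lemma gam_mul_inv : gamQ * gamInvQ = 1 := by
  have h : (gam * gamInvZ).map ((Int.castRingHom ℚ) : ℤ → ℚ)
      = gamQ * gamInvQ := Matrix.map_mul
  rw [gamZ_mul_inv] at h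
  rw [← h]
  exact Matrix.map_one _ (map_zero _) (map_one _)

lemma inv_mul_gam : gamInvQ * gamQ = 1 := by
  have h : (gamInvZ * gam).map ((Int.castRingHom ℚ) : ℤ → ℚ)
      = gamInvQ * gamQ := Matrix.map_mul
  rw [gamZ_inv_mul] at h
  rw [← h]
  exact Matrix.map_one _ (map_zero _) (map_one _)

lemma gam_det_isUnit : IsUnit gamQ.det := by
  have := invertibleOfRightInverse gamQ gamInvQ gam_mul_inv
  exact Matrix.isUnit_det_of_invertible gamQ

lemma gam_inv_eq : gamQ⁻¹ = gamInvQ := Matrix.inv_eq_right_inv gam_mul_inv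

lemma vA_gam : vA ᵥ* gamQ = vA + vB + vC := by
  funext j
  fin_cases j <;>
    norm_num [Matrix.vecMul, dotProduct, Fin.sum_univ_succ, vA, vB, vC, gamQ, gam]

lemma vB_gam : vB ᵥ* gamQ = vB + 2 • vC := by
  funext j
  fin_cases j <;>
    norm_num [Matrix.vecMul, dotProduct, Fin.sum_univ_succ, vB, vC, gamQ, gam]

lemma vC_gam : vC ᵥ* gamQ = vC := by
  funext j
  fin_cases j <;>
    norm_num [Matrix.vecMul, dotProduct, Fin.sum_univ_succ, vC, gamQ, gam]

lemma vD_gam : vD ᵥ* gamQ = -vD := by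
  funext j
  fin_cases j <;>
    norm_num [Matrix.vecMul, dotProduct, Fin.sum_univ_succ, vD, gamQ, gam]

lemma vA_gaminv : vA ᵥ* gamInvQ = vA - vB + vC := by
  funext j
  fin_cases j <;>
    norm_num [Matrix.vecMul, dotProduct, Fin.sum_univ_succ, vA, vB, vC, gamInvQ, gamInvZ]

lemma vB_gaminv : vB ᵥ* gamInvQ = vB - 2 • vC := by
  funext j
  fin_cases j <;>
    norm_num [Matrix.vecMul, dotProduct, Fin.sum_univ_succ, vB, vC, gamInvQ, gamInvZ]

lemma vC_gaminv : vC ᵥ* gamInvQ = vC := by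
  funext j
  fin_cases j <;>
    norm_num [Matrix.vecMul, dotProduct, Fin.sum_univ_succ, vC, gamInvQ, gamInvZ]

lemma vD_gaminv : vD ᵥ* gamInvQ = -vD := by
  funext j
  fin_cases j <;>
    norm_num [Matrix.vecMul, dotProduct, Fin.sum_univ_succ, vD, gamInvQ, gamInvZ]

lemma Db_eq : Db = vA + vD := by
  funext j
  fin_cases j <;>
    norm_num [Db, R0, R1, R2, R3, R4, R5, R6, R7, R8, R9, vA, vD]

lemma neg_one_ne : (-1 : ℚ) ≠ 0 := by norm_num

lemma Db_gam_pow (k : ℤ) :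
    Db ᵥ* (gamQ ^ k) =
      vA + (k : ℚ) • vB + ((k : ℚ)^2) • vC + ((-1 : ℚ)^k) • vD := by
  induction k using Int.induction_on with
  | zero =>
    rw [zpow_zero, Matrix.vecMul_one, Db_eq]
    funext j
    push_cast
    simp only [Pi.add_apply, Pi.smul_apply, smul_eq_mul]
    ring
  | succ i ih =>
    rw [Matrix.zpow_add_one gam_det_isUnit i, ← Matrix.vecMul_vecMul, ih]
    simp only [Matrix.add_vecMul, Matrix.smul_vecMul, vA_gam, vB_gam, vC_gam, vD_gam,
      zpow_add_one₀ neg_one_ne]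
    funext j
    push_cast
    simp only [Pi.add_apply, Pi.smul_apply, Pi.neg_apply, smul_eq_mul]
    ring
  | pred i ih =>
    rw [show (-(i : ℤ) - 1) = (-(i : ℤ)) - 1 from rfl,
      Matrix.zpow_sub_one gam_det_isUnit (-(i : ℤ)), gam_inv_eq, ← Matrix.vecMul_vecMul, ih]
    simp only [Matrix.add_vecMul, Matrix.smul_vecMul, vA_gaminv, vB_gaminv, vC_gaminv, vD_gaminv]
    have h2 : ((-1 : ℚ)) ^ (-(i : ℤ) - 1) = ((-1 : ℚ)) ^ (-(i : ℤ)) * (-1)⁻¹ := by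
      rw [zpow_sub_one₀ neg_one_ne]
    rw [h2]
    funext j
    push_cast
    simp only [Pi.add_apply, Pi.sub_apply, Pi.smul_apply, Pi.neg_apply, smul_eq_mul]
    ring

lemma dot_vA : (Da ᵥ* E10Q) ⬝ᵥ vA = 1/2 := by
  norm_num [Matrix.vecMul, dotProduct, Fin.sum_univ_succ, Da, R0, R1, R2, R3, R4, R5,
    R6, R7, R8, R9, vA, E10Q, E10]

lemma dot_vB : (Da ᵥ* E10Q) ⬝ᵥ vB = 0 := by
  norm_num [Matrix.vecMul, dotProduct, Fin.sum_univ_succ, Da, R0, R1, R2, R3, R4, R5,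
    R6, R7, R8, R9, vB, E10Q, E10]

lemma dot_vC : (Da ᵥ* E10Q) ⬝ᵥ vC = 1 := by
  norm_num [Matrix.vecMul, dotProduct, Fin.sum_univ_succ, Da, R0, R1, R2, R3, R4, R5,
    R6, R7, R8, R9, vC, E10Q, E10]

lemma dot_vD : (Da ᵥ* E10Q) ⬝ᵥ vD = 1/2 := by
  norm_num [Matrix.vecMul, dotProduct, Fin.sum_univ_succ, Da, R0, R1, R2, R3, R4, R5,
    R6, R7, R8, R9, vD, E10Q, E10]

/-- For every integer `k`, `D_a · (D_b·γᵏ) = k² + ½(-1)ᵏ + ½`. -/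
theorem Da_Dbk_intersection (k : ℤ) :
    (Da ᵥ* E10Q) ⬝ᵥ (Db ᵥ* (gamQ ^ k)) = (k : ℚ)^2 + (-1)^k / 2 + 1/2 := by
  rw [Db_gam_pow k]
  simp only [dotProduct_add, dotProduct_smul, dot_vA, dot_vB, dot_vC, dot_vD,
    smul_eq_mul]
  ring
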